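/- Let T be an admissible partition tree of a compact linearly ordered space K. If a, b ∈ T and a ∩ b contains at least two points, then a and b are comparable in the tree order of T (i.e., a ⊆ b or b ⊆ a). -/

import Mathlib

open Set

/-- A partial order is a tree order if the set of strict predecessors of
each element is well-ordered. -/
def IsTreeOrder (T : Type) [PartialOrder T] : Prop :=
  ∀ x : T, IsWellOrder {y : T // y < x} (fun a b => (a : T) < (b : T))

/-- The height of an element of a tree: the order type of its set of strict
predecessors. -/
noncomputable def treeHt {T : Type} [PartialOrder T] (hT : IsTreeOrder T) (x : T) : Ordinal :=
  @Ordinal.type {y : T // y < x} (fun a b => (a : T) < (b : T)) (hT x)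

/-- The level of a tree of order `α`. -/
def treeLevel {T : Type} [PartialOrder T] (hT : IsTreeOrder T) (α : Ordinal) : Set T :=
  {x : T | treeHt hT x = α}

/-- `f` is a cofinal sequence in the limit ordinal `α`: it is a strictly increasing
`cf α`-indexed sequence of ordinals below `α` whose supremum is `α`. -/
def IsCofinalSeq (α : Ordinal) (f : Ordinal → Ordinal) : Prop :=
  (∀ ξ η : Ordinal, ξ < η → η < α.cof.ord → f ξ < f η) ∧
  (∀ ξ : Ordinal, ξ < α.cof.ord → f ξ < α) ∧
  (∀ β : Ordinal, β < α → ∃ ξ : Ordinal, ξ < α.cof.ord ∧ β ≤ f ξ)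

/-- A subset `H` of the level `T_α` (`α` a limit ordinal) is simple if for some
cofinal sequence `(α_ξ)_{ξ < cf α}` in `α` there is an injective regressive map
from `H` into `⋃_{ξ < cf α} T_{α_ξ}`. -/
def TreeSimple {T : Type} [PartialOrder T] (hT : IsTreeOrder T) (α : Ordinal)
    (H : Set T) : Prop :=
  ∃ f : Ordinal → Ordinal, IsCofinalSeq α f ∧
    ∃ π : T → T, Set.InjOn π H ∧
      ∀ x ∈ H, π x < x ∧ ∃ ξ : Ordinal, ξ < α.cof.ord ∧ treeHt hT (π x) = f ξ

/-- A tree is Hausdorff if every nonempty totally ordered subset has at most one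
minimal upper bound. -/
def IsHausdorffTree (T : Type) [PartialOrder T] : Prop :=
  ∀ A : Set T, A.Nonempty → IsChain (· ≤ ·) A → ∀ u v : T,
    u ∈ upperBounds A → (∀ w ∈ upperBounds A, ¬ w < u) →
    v ∈ upperBounds A → (∀ w ∈ upperBounds A, ¬ w < v) → u = v

/-- The interval topology on a tree, generated by the sets `(x, z]` and `(0, z]`. -/
def intervalTopology (T : Type) [PartialOrder T] : TopologicalSpace T :=
  TopologicalSpace.generateFrom
    ({s : Set T | ∃ x z : T, s = Set.Ioc x z} ∪ {s : Set T | ∃ z : T, s = Set.Iic z})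

/-- `T`, together with the interpretation map `I` assigning to each element of `T` a
subset of `K`, is an admissible partition tree of the compact linearly ordered space `K`. -/
structure IsAdmissiblePartitionTree (K : Type) [LinearOrder K] [TopologicalSpace K]
    (T : Type) [PartialOrder T] (I : T → Set K) : Prop where
  /-- The order on `T` is a tree order. -/
  tree : IsTreeOrder T
  /-- The tree order is reverse inclusion of the associated intervals. -/
  le_iff : ∀ a b : T, a ≤ b ↔ I b ⊆ I a
  /-- Every member is a closed subset of `K`. -/
  closed : ∀ a : T, IsClosed (I a)
  /-- Every member is an interval of `K`. -/
  interval : ∀ a : T, (I a).OrdConnected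
  /-- Every member is non-trivial, i.e. has at least two points. -/
  nontrivial : ∀ a : T, ∃ x y : K, x ∈ I a ∧ y ∈ I a ∧ x ≠ y
  /-- The zeroth level consists precisely of (the element representing) `K` itself. -/
  root : ∀ a : T, treeHt tree a = 0 ↔ I a = Set.univ
  /-- The zeroth level is nonempty. -/
  root_exists : ∃ a : T, I a = Set.univ
  /-- Two-element members have no immediate successors. -/
  two_elt : ∀ a : T, (∃ x y : K, x ≠ y ∧ I a = {x, y}) → ¬ ∃ b : T, a ⋖ b
  /-- A member with at least three elements has exactly two immediate successors,
  splitting it at an interior point. -/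
  three_elt : ∀ a : T,
    (∃ x y z : K, x ≠ y ∧ y ≠ z ∧ x ≠ z ∧ x ∈ I a ∧ y ∈ I a ∧ z ∈ I a) →
    ∃ b c : T, a ⋖ b ∧ a ⋖ c ∧ b ≠ c ∧ (∀ d : T, a ⋖ d → d = b ∨ d = c) ∧
      ∃ x y z : K, x < y ∧ y < z ∧
        IsLeast (I a) x ∧ IsLeast (I b) x ∧ IsGreatest (I b) y ∧
        IsLeast (I c) y ∧ IsGreatest (I c) z ∧ IsGreatest (I a) z
  /-- For limit `α`, the members of level `α` are exactly the intersections of members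
  chosen from each earlier level. -/
  limit_level : ∀ α : Ordinal, Order.IsSuccLimit α → ∀ a : T,
    (treeHt tree a = α ↔ ∃ g : Ordinal → T, (∀ ξ : Ordinal, ξ < α → treeHt tree (g ξ) = ξ) ∧
      I a = ⋂ ξ ∈ Set.Iio α, I (g ξ))

lemma treeHt_eq_typein {T : Type} [PartialOrder T] (hT : IsTreeOrder T) {b c : T} (h : c < b) :
    treeHt hT c =
      @Ordinal.typein {y : T // y < b} (fun a b => (a : T) < (b : T)) (hT b) ⟨c, h⟩ := by
  haveI := hT b
  haveI := hT c
  rw [← Ordinal.type_subrel]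
  refine Ordinal.type_eq.mpr ⟨⟨⟨fun y => ⟨⟨y.1, lt_trans y.2 h⟩, y.2⟩,
    fun z => ⟨z.1.1, z.2⟩, fun _ => rfl, fun _ => rfl⟩, Iff.rfl⟩⟩

lemma treeHt_lt_of_lt {T : Type} [PartialOrder T] (hT : IsTreeOrder T) {b c : T} (h : c < b) :
    treeHt hT c < treeHt hT b := by
  haveI := hT b
  rw [treeHt_eq_typein hT h]
  exact Ordinal.typein_lt_type _ _

lemma exists_pred_of_lt_treeHt {T : Type} [PartialOrder T] (hT : IsTreeOrder T) {b : T}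
    {ξ : Ordinal} (h : ξ < treeHt hT b) : ∃ c : T, c < b ∧ treeHt hT c = ξ := by
  haveI := hT b
  obtain ⟨z, hz⟩ := Ordinal.typein_surj (fun a b : {y : T // y < b} => (a : T) < (b : T)) h
  exact ⟨z.1, z.2, by rw [treeHt_eq_typein hT z.2]; exact hz⟩

lemma exists_covby_of_succ {T : Type} [PartialOrder T] (hT : IsTreeOrder T) {b : T}
    {ξ : Ordinal} (h : treeHt hT b = Order.succ ξ) :
    ∃ c : T, c ⋖ b ∧ treeHt hT c = ξ := by
  obtain ⟨c, hcb, hc⟩ := exists_pred_of_lt_treeHt hT (ξ := ξ) (by rw [h]; exact Order.lt_succ ξ)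
  refine ⟨c, ⟨hcb, fun d hd1 hd2 => ?_⟩, hc⟩
  have h1 : treeHt hT c < treeHt hT d := treeHt_lt_of_lt hT hd1
  have h2 : treeHt hT d < treeHt hT b := treeHt_lt_of_lt hT hd2
  rw [h, Order.lt_succ_iff] at h2
  rw [hc] at h1
  exact absurd h2 (not_le.mpr h1)

lemma apt_same_ht {K : Type} [LinearOrder K] [TopologicalSpace K]
    {T : Type} [PartialOrder T] {I : T → Set K}
    (hT : IsAdmissiblePartitionTree K T I) :
    ∀ α : Ordinal, ∀ a b : T, treeHt hT.tree a = α → treeHt hT.tree b = α →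
      (∃ x y : K, x ≠ y ∧ x ∈ I a ∩ I b ∧ y ∈ I a ∩ I b) → a = b := by
  intro α
  induction α using Ordinal.induction with
  | _ α IH =>
  intro a b ha hb hxy
  obtain ⟨x, y, hne, ⟨hxa, hxb⟩, ⟨hya, hyb⟩⟩ := hxy
  rcases Ordinal.zero_or_succ_or_isSuccLimit α with h0 | ⟨β, hβ⟩ | hlim
  · -- zero case
    subst h0
    have h1 : I a = Set.univ := (hT.root a).mp ha
    have h2 : I b = Set.univ := (hT.root b).mp hb
    exact le_antisymm ((hT.le_iff a b).mpr (by rw [h1]; exact subset_univ _))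
      ((hT.le_iff b a).mpr (by rw [h2]; exact subset_univ _))
  · -- successor case
    subst hβ
    rw [← Ordinal.add_one_eq_succ] at *
    obtain ⟨pa, hpaa, hpa⟩ := exists_covby_of_succ hT.tree
      (by rw [ha, Ordinal.add_one_eq_succ])
    obtain ⟨pb, hpbb, hpb⟩ := exists_covby_of_succ hT.tree
      (by rw [hb, Ordinal.add_one_eq_succ])
    have hsub_a : I a ⊆ I pa := (hT.le_iff pa a).mp hpaa.le
    have hsub_b : I b ⊆ I pb := (hT.le_iff pb b).mp hpbb.le
    have hpab : pa = pb := by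
      refine IH β ?_ pa pb hpa hpb ⟨x, y, hne, ⟨hsub_a hxa, hsub_b hxb⟩,
        ⟨hsub_a hya, hsub_b hyb⟩⟩
      rw [Ordinal.add_one_eq_succ]; exact Order.lt_succ β
    subst hpab
    -- pa has at least three points
    obtain ⟨x1, y1, hx1, hy1, hne1⟩ := hT.nontrivial pa
    have h3 : ∃ z ∈ I pa, z ≠ x1 ∧ z ≠ y1 := by
      by_contra hcon
      push_neg at hcon
      refine hT.two_elt pa ⟨x1, y1, hne1, ?_⟩ ⟨a, hpaa⟩
      ext z
      constructor
      · intro hz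
        by_cases h1 : z = x1
        · exact Or.inl h1
        · exact Or.inr ((hcon z hz h1))
      · rintro (rfl | rfl) <;> assumption
    obtain ⟨z, hz, hzx1, hzy1⟩ := h3
    obtain ⟨c, d, hpc, hpd, hcd, huniq, x', y', z', hxy', hyz', _, _, hgc, hld, _, _⟩ :=
      hT.three_elt pa ⟨x1, y1, z, hne1, (Ne.symm hzy1), (Ne.symm hzx1), hx1, hy1, hz⟩
    have hac := huniq a hpaa
    have hbc := huniq b hpbb
    have key : ∀ w : K, w ∈ I c → w ∈ I d → w = y' := fun w h1 h2 =>
      le_antisymm (hgc.2 h1) (hld.2 h2)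
    rcases hac with rfl | rfl <;> rcases hbc with rfl | rfl
    · rfl
    · exact absurd ((key x hxa hxb).trans (key y hya hyb).symm) hne
    · exact absurd ((key x hxb hxa).trans (key y hyb hya).symm) hne
    · rfl
  · -- limit case
    obtain ⟨g, hg, hIa⟩ := (hT.limit_level α hlim a).mp ha
    obtain ⟨g', hg', hIb⟩ := (hT.limit_level α hlim b).mp hb
    have hmem : ∀ ξ, ξ < α → g ξ = g' ξ := by
      intro ξ hξ
      refine IH ξ hξ (g ξ) (g' ξ) (hg ξ hξ) (hg' ξ hξ) ⟨x, y, hne, ⟨?_, ?_⟩, ⟨?_, ?_⟩⟩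
      · exact (hIa ▸ hxa : x ∈ ⋂ ζ ∈ Set.Iio α, I (g ζ)) |> fun hh =>
          Set.mem_iInter₂.mp hh ξ hξ
      · exact Set.mem_iInter₂.mp (hIb ▸ hxb) ξ hξ
      · exact Set.mem_iInter₂.mp (hIa ▸ hya) ξ hξ
      · exact Set.mem_iInter₂.mp (hIb ▸ hyb) ξ hξ
    have hIab : I a = I b := by
      rw [hIa, hIb]
      exact Set.iInter₂_congr (fun ξ hξ => by rw [hmem ξ hξ])
    exact le_antisymm ((hT.le_iff a b).mpr (le_of_eq hIab.symm))
      ((hT.le_iff b a).mpr (le_of_eq hIab))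

lemma apt_le_of_ht_le {K : Type} [LinearOrder K] [TopologicalSpace K]
    {T : Type} [PartialOrder T] {I : T → Set K}
    (hT : IsAdmissiblePartitionTree K T I) (a b : T)
    (hht : treeHt hT.tree a ≤ treeHt hT.tree b)
    (h : ∃ x y : K, x ≠ y ∧ x ∈ I a ∩ I b ∧ y ∈ I a ∩ I b) : a ≤ b := by
  rcases eq_or_lt_of_le hht with heq | hlt
  · exact le_of_eq (apt_same_ht hT _ a b heq rfl h)
  · obtain ⟨c, hcb, hc⟩ := exists_pred_of_lt_treeHt hT.tree hlt
    have hsub : I b ⊆ I c := (hT.le_iff c b).mp hcb.le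
    obtain ⟨x, y, hne, ⟨hxa, hxb⟩, ⟨hya, hyb⟩⟩ := h
    have : a = c := apt_same_ht hT _ a c rfl hc
      ⟨x, y, hne, ⟨hxa, hsub hxb⟩, ⟨hya, hsub hyb⟩⟩
    exact this ▸ hcb.le

/-- If two members of an admissible partition tree meet in at least two points, then they
are comparable in the tree order. -/
theorem stmt_13 {K : Type} [LinearOrder K] [TopologicalSpace K] [OrderTopology K]
    [CompactSpace K] [Nontrivial K]
    {T : Type} [PartialOrder T] {I : T → Set K}
    (hT : IsAdmissiblePartitionTree K T I)
    (a b : T) (h : ∃ x y : K, x ≠ y ∧ x ∈ I a ∩ I b ∧ y ∈ I a ∩ I b) :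
    a ≤ b ∨ b ≤ a := by
  obtain ⟨x, y, hne, hx, hy⟩ := h
  rcases le_total (treeHt hT.tree a) (treeHt hT.tree b) with hle | hle
  · exact Or.inl (apt_le_of_ht_le hT a b hle ⟨x, y, hne, hx, hy⟩)
  · exact Or.inr (apt_le_of_ht_le hT b a hle
      ⟨x, y, hne, ⟨hx.2, hx.1⟩, ⟨hy.2, hy.1⟩⟩)
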